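/- For every positive integer n, the ideal I = ⟨x³, y³, x²y, x²zⁿ - xy²⟩ in k[x,y,z] over a field k is primary. -/

import Mathlib

namespace Stmt2Aux

open Polynomial

variable {k : Type*} [Field k]

noncomputable abbrev T (k : Type*) [Field k] := Polynomial (Polynomial (Polynomial k))

noncomputable def c (i j : ℕ) (f : T k) : Polynomial k := (f.coeff i).coeff j

noncomputable def em (p : Polynomial k) : T k := C (C p)

variable (k) in
noncomputable def J (n : ℕ) : Ideal (T k) :=
  Ideal.span {X ^ 3, (C X) ^ 3, X ^ 2 * C X, X ^ 2 * (C (C X)) ^ n - X * (C X) ^ 2}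

noncomputable def NFa (n : ℕ) (f : T k) : T k :=
  em (c 0 0 f) + em (c 1 0 f) * X + em (c 0 1 f) * C X + em (c 1 1 f) * X * C X
    + em (c 0 2 f) * (C X) ^ 2 + em (c 2 0 f + X ^ n * c 1 2 f) * X ^ 2

lemma em_add (p q : Polynomial k) : em (p + q) = em p + em q := by simp [em]
lemma em_mul (p q : Polynomial k) : em (p * q) = em p * em q := by simp [em]
lemma em_zero : em (0 : Polynomial k) = 0 := by simp [em]
lemma em_Xpow (n : ℕ) : em ((X : Polynomial k) ^ n) = (C (C X) : T k) ^ n := by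
  rw [em]; simp

lemma c_monomial (p q i j : ℕ) (b : Polynomial k) :
    c p q (monomial i (monomial j b)) = if i = p ∧ j = q then b else 0 := by
  unfold c; rw [coeff_monomial]
  by_cases h : i = p
  · simp [h, coeff_monomial]
  · simp [h]

lemma mono_eq (i j : ℕ) (b : Polynomial k) :
    (monomial i (monomial j b) : T k) = em b * (C X) ^ j * X ^ i := by
  rw [em, ← map_pow, ← map_mul, C_mul_X_pow_eq_monomial, C_mul_X_pow_eq_monomial]

lemma NFa_add (n : ℕ) (f g : T k) : NFa n (f + g) = NFa n f + NFa n g := by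
  simp only [NFa, c, coeff_add, mul_add, em_add]; ring

lemma NFa_monomial (n i j : ℕ) (b : Polynomial k) :
    NFa n (monomial i (monomial j b) : T k)
      = em (if i = 0 ∧ j = 0 then b else 0) + em (if i = 1 ∧ j = 0 then b else 0) * X
        + em (if i = 0 ∧ j = 1 then b else 0) * C X
        + em (if i = 1 ∧ j = 1 then b else 0) * X * C X
        + em (if i = 0 ∧ j = 2 then b else 0) * (C X) ^ 2
        + em ((if i = 2 ∧ j = 0 then b else 0)
            + X ^ n * (if i = 1 ∧ j = 2 then b else 0)) * X ^ 2 := by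
  rw [NFa]; simp only [c_monomial]

lemma c_mul (i j : ℕ) (f g : T k) :
    c i j (f * g) = ∑ p ∈ Finset.HasAntidiagonal.antidiagonal i, ∑ q ∈ Finset.HasAntidiagonal.antidiagonal j,
      c p.1 q.1 f * c p.2 q.2 g := by
  simp [c, Polynomial.coeff_mul, Polynomial.finset_sum_coeff]

variable (f g : T k)

lemma c00_mul : c 0 0 (f * g) = c 0 0 f * c 0 0 g := by
  rw [c_mul]; simp [Finset.Nat.sum_antidiagonal_eq_sum_range_succ_mk, Finset.sum_range_succ]
lemma c10_mul : c 1 0 (f * g) = c 0 0 f * c 1 0 g + c 1 0 f * c 0 0 g := by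
  rw [c_mul]; simp [Finset.Nat.sum_antidiagonal_eq_sum_range_succ_mk, Finset.sum_range_succ]
lemma c01_mul : c 0 1 (f * g) = c 0 0 f * c 0 1 g + c 0 1 f * c 0 0 g := by
  rw [c_mul]; simp [Finset.Nat.sum_antidiagonal_eq_sum_range_succ_mk, Finset.sum_range_succ]
lemma c11_mul : c 1 1 (f * g) = c 0 0 f * c 1 1 g + c 0 1 f * c 1 0 g
    + c 1 0 f * c 0 1 g + c 1 1 f * c 0 0 g := by
  rw [c_mul]; simp [Finset.Nat.sum_antidiagonal_eq_sum_range_succ_mk, Finset.sum_range_succ]; ring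
lemma c02_mul : c 0 2 (f * g) = c 0 0 f * c 0 2 g + c 0 1 f * c 0 1 g + c 0 2 f * c 0 0 g := by
  rw [c_mul]; simp [Finset.Nat.sum_antidiagonal_eq_sum_range_succ_mk, Finset.sum_range_succ]
lemma c20_mul : c 2 0 (f * g) = c 0 0 f * c 2 0 g + c 1 0 f * c 1 0 g + c 2 0 f * c 0 0 g := by
  rw [c_mul]; simp [Finset.Nat.sum_antidiagonal_eq_sum_range_succ_mk, Finset.sum_range_succ]
lemma c12_mul : c 1 2 (f * g) = c 0 0 f * c 1 2 g + c 0 1 f * c 1 1 g + c 0 2 f * c 1 0 g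
    + c 1 0 f * c 0 2 g + c 1 1 f * c 0 1 g + c 1 2 f * c 0 0 g := by
  rw [c_mul]; simp [Finset.Nat.sum_antidiagonal_eq_sum_range_succ_mk, Finset.sum_range_succ]; ring

def NZ (n : ℕ) (f : T k) : Prop :=
  c 0 0 f = 0 ∧ c 1 0 f = 0 ∧ c 0 1 f = 0 ∧ c 1 1 f = 0 ∧ c 0 2 f = 0 ∧
    c 2 0 f + X ^ n * c 1 2 f = 0

lemma nz_g1 (n : ℕ) : NZ n (X ^ 3 : T k) := by
  simp [NZ, c, coeff_X_pow]

lemma nz_g2 (n : ℕ) : NZ n ((C X) ^ 3 : T k) := by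
  simp [NZ, c, ← map_pow, coeff_C, coeff_X_pow]

lemma nz_g3 (n : ℕ) : NZ n (X ^ 2 * C X : T k) := by
  rw [show (X ^ 2 * C X : T k) = C X * X ^ 2 by ring]
  simp [NZ, c, coeff_C_mul, coeff_X_pow]

lemma nz_g4 (n : ℕ) : NZ n (X ^ 2 * (C (C X)) ^ n - X * (C X) ^ 2 : T k) := by
  rw [show (X ^ 2 * (C (C X)) ^ n - X * (C X) ^ 2 : T k)
      = C ((C X) ^ n) * X ^ 2 - C (X ^ 2) * X by rw [map_pow, map_pow]; ring]
  simp [NZ, c, coeff_sub, coeff_C_mul, coeff_X_pow, coeff_C, coeff_X, ← map_pow]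

lemma nz_mul_left (n : ℕ) (r : T k) {f : T k} (h : NZ n f) : NZ n (r * f) := by
  obtain ⟨h0, h1, h2, h3, h4, h5⟩ := h
  refine ⟨?_, ?_, ?_, ?_, ?_, ?_⟩
  · rw [c00_mul, h0, mul_zero]
  · rw [c10_mul, h0, h1]; ring
  · rw [c01_mul, h0, h2]; ring
  · rw [c11_mul, h0, h1, h2, h3]; ring
  · rw [c02_mul, h0, h2, h4]; ring
  · rw [c20_mul, c12_mul, h0, h1, h2, h3, h4]
    linear_combination (c 0 0 r) * h5

lemma nz_add (n : ℕ) {f g : T k} (hf : NZ n f) (hg : NZ n g) : NZ n (f + g) := by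
  obtain ⟨a0, a1, a2, a3, a4, a5⟩ := hf
  obtain ⟨b0, b1, b2, b3, b4, b5⟩ := hg
  refine ⟨?_, ?_, ?_, ?_, ?_, ?_⟩ <;> simp only [c, coeff_add] at *
  · linear_combination a0 + b0
  · linear_combination a1 + b1
  · linear_combination a2 + b2
  · linear_combination a3 + b3
  · linear_combination a4 + b4
  · linear_combination a5 + b5

lemma nz_zero (n : ℕ) : NZ n (0 : T k) := by simp [NZ, c]

lemma nz_of_mem {n : ℕ} {f : T k} (h : f ∈ J k n) : NZ n f := by
  refine Submodule.span_induction ?_ (nz_zero n) (fun x y _ _ hx hy => nz_add n hx hy)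
    (fun r x _ hx => by simpa [smul_eq_mul] using nz_mul_left n r hx) h
  rintro x (rfl | rfl | rfl | rfl)
  · exact nz_g1 n
  · exact nz_g2 n
  · exact nz_g3 n
  · exact nz_g4 n

lemma hg1 (n : ℕ) : (X ^ 3 : T k) ∈ J k n := Ideal.subset_span (by simp)
lemma hg2 (n : ℕ) : ((C X) ^ 3 : T k) ∈ J k n := Ideal.subset_span (by simp)
lemma hg3 (n : ℕ) : (X ^ 2 * C X : T k) ∈ J k n := Ideal.subset_span (by simp)
lemma hg4 (n : ℕ) : (X ^ 2 * (C (C X)) ^ n - X * (C X) ^ 2 : T k) ∈ J k n :=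
  Ideal.subset_span (by simp)

lemma nf_mem (n : ℕ) (f : T k) : f - NFa n f ∈ J k n := by
  induction f using Polynomial.induction_on' with
  | add p q hp hq =>
    have h : p + q - NFa n (p + q) = (p - NFa n p) + (q - NFa n q) := by rw [NFa_add]; ring
    rw [h]; exact Ideal.add_mem _ hp hq
  | monomial i a =>
    induction a using Polynomial.induction_on' with
    | add p q hp hq =>
      have h : (monomial i (p + q) : T k) - NFa n (monomial i (p + q))
          = (monomial i p - NFa n (monomial i p)) + (monomial i q - NFa n (monomial i q)) := by
        rw [map_add, NFa_add]; ring
      rw [h]; exact Ideal.add_mem _ hp hq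
    | monomial j b =>
      clear * -
      rcases j with _ | _ | _ | j
      · rcases i with _ | _ | _ | i
        · have h : (monomial 0 (monomial 0 b) : T k) - NFa n (monomial 0 (monomial 0 b)) = 0 := by
            rw [NFa_monomial, mono_eq]; norm_num [em_zero]; ring
          rw [h]; exact (J k n).zero_mem
        · have h : (monomial 1 (monomial 0 b) : T k) - NFa n (monomial 1 (monomial 0 b)) = 0 := by
            rw [NFa_monomial, mono_eq]; norm_num [em_zero]; ring
          rw [h]; exact (J k n).zero_mem
        · have h : (monomial 2 (monomial 0 b) : T k) - NFa n (monomial 2 (monomial 0 b)) = 0 := by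
            rw [NFa_monomial, mono_eq]; norm_num [em_zero]; ring
          rw [h]; exact (J k n).zero_mem
        · have hne0 : ¬(i + 3 = 0) := by omega
          have hne1 : ¬(i + 3 = 1) := by omega
          have hne2 : ¬(i + 3 = 2) := by omega
          have h : (monomial (i + 3) (monomial 0 b) : T k)
              - NFa n (monomial (i + 3) (monomial 0 b))
              = (em b * X ^ i) * X ^ 3 := by
            rw [NFa_monomial, mono_eq]; norm_num [em_zero, hne0, hne1, hne2]; ring
          rw [h]; exact Ideal.mul_mem_left _ _ (hg1 n)
      · rcases i with _ | _ | _ | i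
        · have h : (monomial 0 (monomial 1 b) : T k) - NFa n (monomial 0 (monomial 1 b)) = 0 := by
            rw [NFa_monomial, mono_eq]; norm_num [em_zero]; ring
          rw [h]; exact (J k n).zero_mem
        · have h : (monomial 1 (monomial 1 b) : T k) - NFa n (monomial 1 (monomial 1 b)) = 0 := by
            rw [NFa_monomial, mono_eq]; norm_num [em_zero]; ring
          rw [h]; exact (J k n).zero_mem
        · have h : (monomial 2 (monomial 1 b) : T k) - NFa n (monomial 2 (monomial 1 b))
              = em b * (X ^ 2 * C X) := by
            rw [NFa_monomial, mono_eq]; norm_num [em_zero]; ring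
          rw [h]; exact Ideal.mul_mem_left _ _ (hg3 n)
        · have hne0 : ¬(i + 3 = 0) := by omega
          have hne1 : ¬(i + 3 = 1) := by omega
          have hne2 : ¬(i + 3 = 2) := by omega
          have h : (monomial (i + 3) (monomial 1 b) : T k)
              - NFa n (monomial (i + 3) (monomial 1 b))
              = (em b * C X * X ^ i) * X ^ 3 := by
            rw [NFa_monomial, mono_eq]; norm_num [em_zero, hne0, hne1, hne2]; ring
          rw [h]; exact Ideal.mul_mem_left _ _ (hg1 n)
      · rcases i with _ | _ | _ | i
        · have h : (monomial 0 (monomial 2 b) : T k) - NFa n (monomial 0 (monomial 2 b)) = 0 := by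
            rw [NFa_monomial, mono_eq]; norm_num [em_zero]; ring
          rw [h]; exact (J k n).zero_mem
        · have h : (monomial 1 (monomial 2 b) : T k) - NFa n (monomial 1 (monomial 2 b))
              = (-em b) * (X ^ 2 * (C (C X)) ^ n - X * (C X) ^ 2) := by
            rw [NFa_monomial, mono_eq]
            norm_num [em_zero, em_mul, em_add, em_Xpow]
            ring
          rw [h]; exact Ideal.mul_mem_left _ _ (hg4 n)
        · have h : (monomial 2 (monomial 2 b) : T k) - NFa n (monomial 2 (monomial 2 b))
              = (em b * C X) * (X ^ 2 * C X) := by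
            rw [NFa_monomial, mono_eq]; norm_num [em_zero]; ring
          rw [h]; exact Ideal.mul_mem_left _ _ (hg3 n)
        · have hne0 : ¬(i + 3 = 0) := by omega
          have hne1 : ¬(i + 3 = 1) := by omega
          have hne2 : ¬(i + 3 = 2) := by omega
          have h : (monomial (i + 3) (monomial 2 b) : T k)
              - NFa n (monomial (i + 3) (monomial 2 b))
              = (em b * (C X) ^ 2 * X ^ i) * X ^ 3 := by
            rw [NFa_monomial, mono_eq]; norm_num [em_zero, hne0, hne1, hne2]; ring
          rw [h]; exact Ideal.mul_mem_left _ _ (hg1 n)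
      · have hne0 : ¬(j + 3 = 0) := by omega
        have hne1 : ¬(j + 3 = 1) := by omega
        have hne2 : ¬(j + 3 = 2) := by omega
        have h : (monomial i (monomial (j + 3) b) : T k)
            - NFa n (monomial i (monomial (j + 3) b))
            = (em b * (C X) ^ j * X ^ i) * (C X) ^ 3 := by
          rw [NFa_monomial, mono_eq]; norm_num [em_zero, hne0, hne1, hne2]; ring
        rw [h]; exact Ideal.mul_mem_left _ _ (hg2 n)

lemma sub_c00_mem (f : T k) : f - em (c 0 0 f) ∈ Ideal.span {(X : T k), C X} := by
  induction f using Polynomial.induction_on' with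
  | add p q hp hq =>
    have h : p + q - em (c 0 0 (p + q)) = (p - em (c 0 0 p)) + (q - em (c 0 0 q)) := by
      simp only [c, coeff_add, em_add]; ring
    rw [h]; exact Ideal.add_mem _ hp hq
  | monomial i a =>
    induction a using Polynomial.induction_on' with
    | add p q hp hq =>
      have h : (monomial i (p + q) : T k) - em (c 0 0 (monomial i (p + q)))
          = (monomial i p - em (c 0 0 (monomial i p)))
            + (monomial i q - em (c 0 0 (monomial i q))) := by
        simp only [map_add, c, coeff_add, em_add]; ring
      rw [h]; exact Ideal.add_mem _ hp hq
    | monomial j b =>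
      clear * -
      rcases i with _ | i
      · rcases j with _ | j
        · have h : (monomial 0 (monomial 0 b) : T k) - em (c 0 0 (monomial 0 (monomial 0 b)))
              = 0 := by
            rw [c_monomial, mono_eq]; norm_num; ring
          rw [h]; exact Ideal.zero_mem _
        · have h : (monomial 0 (monomial (j + 1) b) : T k)
              - em (c 0 0 (monomial 0 (monomial (j + 1) b)))
              = (em b * (C X) ^ j) * C X := by
            rw [c_monomial, mono_eq]; norm_num [em_zero]; ring
          rw [h]
          exact Ideal.mul_mem_left _ _ (Ideal.subset_span (by simp))
      · have h : (monomial (i + 1) (monomial j b) : T k)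
            - em (c 0 0 (monomial (i + 1) (monomial j b)))
            = (em b * (C X) ^ j * X ^ i) * X := by
          rw [c_monomial, mono_eq]; norm_num [em_zero]; ring
        rw [h]
        exact Ideal.mul_mem_left _ _ (Ideal.subset_span (by simp))

theorem J_isPrimary (n : ℕ) : Ideal.IsPrimary (R := T k) (J k n) := by
  rw [Ideal.isPrimary_iff]
  constructor
  · intro h
    have h1 : (1 : T k) ∈ J k n := h ▸ Submodule.mem_top
    have h0 := (nz_of_mem h1).1
    simp [c] at h0
  · intro a b hab
    by_cases hb : c 0 0 b = 0
    · right
      have hxy : Ideal.span {(X : T k), C X} ≤ Ideal.radical (R := T k) (J k n) := by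
        rw [Ideal.span_le]
        rintro t (rfl | rfl)
        · exact Ideal.mem_radical_iff.mpr ⟨3, hg1 n⟩
        · exact Ideal.mem_radical_iff.mpr ⟨3, hg2 n⟩
      have h := sub_c00_mem b
      have hb2 : b = (b - em (c 0 0 b)) + em (c 0 0 b) := by ring
      rw [hb2]
      exact hxy (Ideal.add_mem _ h (by rw [hb, em_zero]; exact Ideal.zero_mem _))
    · left
      obtain ⟨h0, h1, h2, h3, h4, h5⟩ := nz_of_mem hab
      rw [c00_mul] at h0
      rw [c10_mul] at h1
      rw [c01_mul] at h2
      rw [c11_mul] at h3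
      rw [c02_mul] at h4
      rw [c20_mul, c12_mul] at h5
      have a0 : c 0 0 a = 0 := (mul_eq_zero.1 h0).resolve_right hb
      have e1 : c 1 0 a * c 0 0 b = 0 := by linear_combination h1 - c 1 0 b * a0
      have a1 : c 1 0 a = 0 := (mul_eq_zero.1 e1).resolve_right hb
      have e2 : c 0 1 a * c 0 0 b = 0 := by linear_combination h2 - c 0 1 b * a0
      have a2 : c 0 1 a = 0 := (mul_eq_zero.1 e2).resolve_right hb
      have e3 : c 1 1 a * c 0 0 b = 0 := by
        linear_combination h3 - c 1 1 b * a0 - c 0 1 b * a1 - c 1 0 b * a2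
      have a3 : c 1 1 a = 0 := (mul_eq_zero.1 e3).resolve_right hb
      have e4 : c 0 2 a * c 0 0 b = 0 := by
        linear_combination h4 - c 0 2 b * a0 - c 0 1 b * a2
      have a4 : c 0 2 a = 0 := (mul_eq_zero.1 e4).resolve_right hb
      have e5 : (c 2 0 a + X ^ n * c 1 2 a) * c 0 0 b = 0 := by
        linear_combination h5 - c 2 0 b * a0 - c 1 0 b * a1 - X ^ n * c 1 2 b * a0
          - X ^ n * c 1 1 b * a2 - X ^ n * c 1 0 b * a4 - X ^ n * c 0 2 b * a1
          - X ^ n * c 0 1 b * a3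
      have a5 : c 2 0 a + X ^ n * c 1 2 a = 0 := (mul_eq_zero.1 e5).resolve_right hb
      have hnf := nf_mem n a
      have hz : NFa n a = 0 := by
        rw [NFa, a0, a1, a2, a3, a4, a5]
        simp [em_zero]
      have ha : a = (a - NFa n a) + NFa n a := by ring
      rw [ha]
      exact Ideal.add_mem _ hnf (by rw [hz]; exact Ideal.zero_mem _)


noncomputable def e3 (k : Type*) [Field k] : MvPolynomial (Fin 3) k ≃ₐ[k] T k :=
  (MvPolynomial.finSuccEquiv k 2).trans <| Polynomial.mapAlgEquiv <|
    (MvPolynomial.finSuccEquiv k 1).trans <| Polynomial.mapAlgEquiv <|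
      (MvPolynomial.finSuccEquiv k 0).trans <|
        Polynomial.mapAlgEquiv (MvPolynomial.isEmptyAlgEquiv k (Fin 0))

lemma e3_X0 (k : Type*) [Field k] : e3 k (MvPolynomial.X 0) = X := by
  simp [e3, MvPolynomial.finSuccEquiv_X_zero, Polynomial.coe_mapAlgEquiv]

lemma e3_X1 (k : Type*) [Field k] : e3 k (MvPolynomial.X 1) = C X := by
  have h1 : (MvPolynomial.X 1 : MvPolynomial (Fin 3) k) = MvPolynomial.X (Fin.succ 0) := rfl
  rw [e3, AlgEquiv.trans_apply, h1, MvPolynomial.finSuccEquiv_X_succ]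
  simp [Polynomial.coe_mapAlgEquiv, MvPolynomial.finSuccEquiv_X_zero]

lemma e3_X2 (k : Type*) [Field k] : e3 k (MvPolynomial.X 2) = C (C X) := by
  have h1 : (MvPolynomial.X 2 : MvPolynomial (Fin 3) k) = MvPolynomial.X (Fin.succ 1) := rfl
  rw [e3, AlgEquiv.trans_apply, h1, MvPolynomial.finSuccEquiv_X_succ]
  have h2 : (MvPolynomial.X 1 : MvPolynomial (Fin 2) k) = MvPolynomial.X (Fin.succ 0) := rfl
  simp [Polynomial.coe_mapAlgEquiv, h2, MvPolynomial.finSuccEquiv_X_succ,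
    MvPolynomial.finSuccEquiv_X_zero]

lemma isPrimary_comap {R S : Type*} [CommRing R] [CommRing S] (f : R →+* S) {Q : Ideal S}
    (h : Ideal.IsPrimary (R := S) Q) : Ideal.IsPrimary (R := R) (Q.comap f) := by
  rw [Ideal.isPrimary_iff] at h ⊢
  constructor
  · intro ht
    apply h.1
    rw [Ideal.eq_top_iff_one] at ht ⊢
    simpa using ht
  · intro x y hxy
    rcases h.2 (show f x * f y ∈ Q by rw [← map_mul]; exact hxy) with hx | hy
    · exact Or.inl hx
    · right
      rw [← Ideal.comap_radical]
      exact hy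

end Stmt2Aux

open MvPolynomial

theorem stmt2 (k : Type*) [Field k] (n : ℕ) (hn : 0 < n) :
    (Ideal.span {(X 0 : MvPolynomial (Fin 3) k) ^ 3, X 1 ^ 3, X 0 ^ 2 * X 1,
      X 0 ^ 2 * X 2 ^ n - X 0 * X 1 ^ 2}).IsPrimary := by
  set f : MvPolynomial (Fin 3) k →+* Stmt2Aux.T k := (Stmt2Aux.e3 k).toAlgHom.toRingHom with hf
  have hmap : Ideal.map f (Ideal.span {(X 0 : MvPolynomial (Fin 3) k) ^ 3, X 1 ^ 3, X 0 ^ 2 * X 1,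
      X 0 ^ 2 * X 2 ^ n - X 0 * X 1 ^ 2}) = Stmt2Aux.J k n := by
    rw [Ideal.map_span, Stmt2Aux.J]
    congr 1
    have c0 : f (X 0) = Polynomial.X := Stmt2Aux.e3_X0 k
    have c1 : f (X 1) = Polynomial.C Polynomial.X := Stmt2Aux.e3_X1 k
    have c2 : f (X 2) = Polynomial.C (Polynomial.C Polynomial.X) := Stmt2Aux.e3_X2 k
    simp only [Set.image_insert_eq, Set.image_singleton, map_pow, map_mul, map_sub, c0, c1, c2]
  have hcomap : Ideal.span {(X 0 : MvPolynomial (Fin 3) k) ^ 3, X 1 ^ 3, X 0 ^ 2 * X 1,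
      X 0 ^ 2 * X 2 ^ n - X 0 * X 1 ^ 2} = Ideal.comap f (Stmt2Aux.J k n) := by
    rw [← hmap]
    exact (Ideal.comap_map_of_bijective f (Stmt2Aux.e3 k).bijective).symm
  rw [hcomap]
  exact Stmt2Aux.isPrimary_comap (R := MvPolynomial (Fin 3) k) (S := Stmt2Aux.T k) f
    (Stmt2Aux.J_isPrimary (k := k) n)
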